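/- Let N be a positive integer, let Ẋ_1, …, Ẋ_N be m×d real matrices each of full column rank d, and let w_1, …, w_N be strictly positive reals. If there exists a basis (e_1, …, e_m) of ℝ^m such that for every t ∈ {1, …, m} there is an index j_t with Ẋ_{j_t}ᵀ ·ᵥ e_t = 0, then the matrix ℳ := Σ_{j=1}^N w_j · M(Ẋ_j) is invertible. (Invertibility of ℳ(V) when the instruments are discretely distributed.) -/

import Mathlib

open Matrix

lemma aux_sum_dotProduct {n ι : Type*} [Fintype n] (s : Finset ι) (f : ι → n → ℝ)
    (w : n → ℝ) : (∑ i ∈ s, f i) ⬝ᵥ w = ∑ i ∈ s, f i ⬝ᵥ w := by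
  simp only [dotProduct, Finset.sum_apply, Finset.sum_mul]
  exact Finset.sum_comm

lemma aux_dotProduct_sum {n ι : Type*} [Fintype n] (s : Finset ι) (v : n → ℝ)
    (f : ι → n → ℝ) : v ⬝ᵥ (∑ i ∈ s, f i) = ∑ i ∈ s, v ⬝ᵥ f i := by
  simp only [dotProduct, Finset.sum_apply, Finset.mul_sum]
  exact Finset.sum_comm

lemma aux_sum_mulVec {n m ι : Type*} [Fintype n] (s : Finset ι)
    (A : ι → Matrix m n ℝ) (x : n → ℝ) :
    (∑ j ∈ s, A j) *ᵥ x = ∑ j ∈ s, A j *ᵥ x := by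
  ext i
  simp only [Matrix.mulVec, dotProduct, Matrix.sum_apply, Finset.sum_apply, Finset.sum_mul]
  rw [Finset.sum_comm]

lemma aux_dotProduct_self_nonneg {n : Type*} [Fintype n] (v : n → ℝ) : 0 ≤ v ⬝ᵥ v :=
  Finset.sum_nonneg fun i _ => mul_self_nonneg _

/-- Invertibility of `ℳ(V)` when the instruments are discretely distributed: a positively
weighted finite sum of projections `M(Ẋ_j) = I − Ẋ_j(Ẋ_jᵀẊ_j)⁻¹Ẋ_jᵀ` is invertible when some
basis vectors of `ℝ^m` are annihilated by the transposes of the corresponding matrices. -/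
theorem weighted_sum_of_projections_invertible
    (m d N : ℕ) (hd : 0 < d) (hdm : d < m) (hN : 0 < N)
    (Xdot : Fin N → Matrix (Fin m) (Fin d) ℝ)
    (hrank : ∀ j, (Xdot j).rank = d)
    (w : Fin N → ℝ) (hw : ∀ j, 0 < w j)
    (e : Module.Basis (Fin m) ℝ (Fin m → ℝ))
    (he : ∀ t : Fin m, ∃ j : Fin N, (Xdot j)ᵀ *ᵥ e t = 0) :
    IsUnit (∑ j, w j •
      ((1 : Matrix (Fin m) (Fin m) ℝ)
        - Xdot j * ((Xdot j)ᵀ * Xdot j)⁻¹ * (Xdot j)ᵀ)) := by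
  set M : Fin N → Matrix (Fin m) (Fin m) ℝ := fun j =>
    (1 : Matrix (Fin m) (Fin m) ℝ)
        - Xdot j * ((Xdot j)ᵀ * Xdot j)⁻¹ * (Xdot j)ᵀ with hM
  -- injectivity of mulVec (Xdot j)
  have hinj : ∀ j (v : Fin d → ℝ), Xdot j *ᵥ v = 0 → v = 0 := by
    intro j v hv
    have hker : LinearMap.ker (Xdot j).mulVecLin = ⊥ := by
      have h1 := (Xdot j).mulVecLin.finrank_range_add_finrank_ker
      have h2 : Module.finrank ℝ (LinearMap.range (Xdot j).mulVecLin) = d := hrank j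
      rw [h2, Module.finrank_pi, Fintype.card_fin] at h1
      exact Submodule.finrank_eq_zero.mp (by omega)
    have : v ∈ LinearMap.ker (Xdot j).mulVecLin := by
      simpa [Matrix.mulVecLin_apply] using hv
    simpa [hker] using this
  -- XᵀX positive definite
  have hPD : ∀ j, ((Xdot j)ᵀ * Xdot j).PosDef := by
    intro j
    refine Matrix.PosDef.of_dotProduct_mulVec_pos (by simpa using Matrix.isHermitian_conjTranspose_mul_self (Xdot j)) fun v hv => ?_
    have : star v ⬝ᵥ ((Xdot j)ᵀ * Xdot j) *ᵥ v = (Xdot j *ᵥ v) ⬝ᵥ (Xdot j *ᵥ v) := by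
      rw [star_trivial, ← Matrix.mulVec_mulVec, Matrix.dotProduct_mulVec,
        Matrix.vecMul_transpose]
    rw [this]
    rcases lt_or_eq_of_le (aux_dotProduct_self_nonneg (Xdot j *ᵥ v)) with h | h
    · exact h
    · exact absurd (hinj j v (dotProduct_self_eq_zero.mp h.symm)) hv
  have hG : ∀ j, ((Xdot j)ᵀ * Xdot j) * ((Xdot j)ᵀ * Xdot j)⁻¹ = 1 := fun j =>
    Matrix.mul_nonsing_inv _ ((hPD j).det_pos.ne'.isUnit)
  -- M is symmetric
  have hsymm : ∀ j, (M j)ᵀ = M j := by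
    intro j
    have hinv : (((Xdot j)ᵀ * Xdot j)⁻¹)ᵀ = ((Xdot j)ᵀ * Xdot j)⁻¹ := by
      rw [Matrix.transpose_nonsing_inv]
      congr 1
      rw [Matrix.transpose_mul, Matrix.transpose_transpose]
    simp [hM, Matrix.transpose_sub, Matrix.transpose_mul, hinv, Matrix.mul_assoc]
  -- M is idempotent
  have hidem : ∀ j, M j * M j = M j := by
    intro j
    have inner : (Xdot j)ᵀ * (Xdot j * (((Xdot j)ᵀ * Xdot j)⁻¹ * (Xdot j)ᵀ))
        = (Xdot j)ᵀ := by
      rw [← Matrix.mul_assoc, ← Matrix.mul_assoc, hG j, Matrix.one_mul]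
    have key : (Xdot j * ((Xdot j)ᵀ * Xdot j)⁻¹ * (Xdot j)ᵀ) *
        (Xdot j * ((Xdot j)ᵀ * Xdot j)⁻¹ * (Xdot j)ᵀ) =
        Xdot j * ((Xdot j)ᵀ * Xdot j)⁻¹ * (Xdot j)ᵀ := by
      simp only [Matrix.mul_assoc]
      rw [inner]
    simp [hM, sub_mul, mul_sub, key]
  -- key: x ⬝ᵥ (M j *ᵥ x) = ‖M j x‖²
  have hq : ∀ j (x : Fin m → ℝ), x ⬝ᵥ (M j *ᵥ x) = (M j *ᵥ x) ⬝ᵥ (M j *ᵥ x) := by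
    intro j x
    conv_lhs => rw [← hidem j]
    rw [← Matrix.mulVec_mulVec, Matrix.dotProduct_mulVec, ← Matrix.mulVec_transpose, hsymm j]
  -- ℳ is positive definite
  have hPDM : (∑ j, w j • M j).PosDef := by
    refine Matrix.PosDef.of_dotProduct_mulVec_pos ?_ ?_
    · show (∑ j, w j • M j)ᴴ = _
      rw [Matrix.conjTranspose_sum]
      refine Finset.sum_congr rfl fun j _ => ?_
      rw [Matrix.conjTranspose_smul]
      simp only [star_trivial]
      congr 1
      rw [Matrix.conjTranspose_eq_transpose_of_trivial, hsymm j]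
    · intro x hx
      have hexp : star x ⬝ᵥ (∑ j, w j • M j) *ᵥ x
          = ∑ j, w j * ((M j *ᵥ x) ⬝ᵥ (M j *ᵥ x)) := by
        rw [star_trivial, aux_sum_mulVec, aux_dotProduct_sum]
        refine Finset.sum_congr rfl fun j _ => ?_
        rw [Matrix.smul_mulVec, dotProduct_smul, smul_eq_mul, hq j x]
      rw [hexp]
      have hnonneg : ∀ j ∈ Finset.univ, 0 ≤ w j * ((M j *ᵥ x) ⬝ᵥ (M j *ᵥ x)) := fun j _ =>
        mul_nonneg (hw j).le (aux_dotProduct_self_nonneg _)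
      rcases lt_or_eq_of_le (Finset.sum_nonneg hnonneg) with h | h
      · exact h
      -- sum is zero: derive x = 0, contradiction
      exfalso
      have hzero : ∀ j, M j *ᵥ x = 0 := by
        intro j
        have := (Finset.sum_eq_zero_iff_of_nonneg hnonneg).mp h.symm j (Finset.mem_univ j)
        have h2 : (M j *ᵥ x) ⬝ᵥ (M j *ᵥ x) = 0 := by
          rcases mul_eq_zero.mp this with h' | h'
          · exact absurd h' (hw j).ne'
          · exact h'
        exact dotProduct_self_eq_zero.mp h2
      -- x is in the column space of every Xdot j
      have hcol : ∀ j, x = Xdot j *ᵥ ((((Xdot j)ᵀ * Xdot j)⁻¹ * (Xdot j)ᵀ) *ᵥ x) := by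
        intro j
        have := hzero j
        rw [hM] at this
        simp only [Matrix.sub_mulVec, Matrix.one_mulVec, sub_eq_zero] at this
        calc x = (Xdot j * ((Xdot j)ᵀ * Xdot j)⁻¹ * (Xdot j)ᵀ) *ᵥ x := this
          _ = Xdot j *ᵥ ((((Xdot j)ᵀ * Xdot j)⁻¹ * (Xdot j)ᵀ) *ᵥ x) := by
              rw [Matrix.mulVec_mulVec, Matrix.mul_assoc]
      -- each basis vector is orthogonal to x
      have horth : ∀ t : Fin m, e t ⬝ᵥ x = 0 := by
        intro t
        obtain ⟨j, hj⟩ := he t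
        rw [hcol j, Matrix.dotProduct_mulVec, ← Matrix.mulVec_transpose, hj,
          zero_dotProduct]
      -- hence x = 0
      apply hx
      rw [← dotProduct_self_eq_zero (v := x)]
      calc x ⬝ᵥ x = (∑ t, e.repr x t • e t) ⬝ᵥ x := by rw [e.sum_repr x]
        _ = ∑ t, (e.repr x t • e t) ⬝ᵥ x := aux_sum_dotProduct _ _ _
        _ = 0 := Finset.sum_eq_zero fun t _ => by
              rw [smul_dotProduct, horth t, smul_zero]
  exact hPDM.isUnit
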